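/- Let R_n = ℤ[x₁^{±1},…,x_n^{±1}] be the Laurent polynomial ring in n variables and σ_i = x_i - 1. If A is an n×n matrix over R_n satisfying A·σ⃗ = 0⃗, where σ⃗ is the column vector with entries σ_i, then for every pair of indices k, l, the entry a_{k,l} lies in the ideal generated by {σ_i : i ≠ l}; in particular each entry lies in the augmentation ideal 𝔄 = Σ_{i=1}^n σ_i R_n. -/

import Mathlib

/-- The Laurent polynomial ring `R_n = ℤ[x₁^{±1},…,x_n^{±1}] = ℤ[ℤⁿ]`. -/
abbrev Rn (n : ℕ) := AddMonoidAlgebra ℤ (Fin n →₀ ℤ)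

/-- The variable `x_i` of `R_n`. -/
noncomputable def Xv {n : ℕ} (i : Fin n) : Rn n :=
  AddMonoidAlgebra.single (Finsupp.single i 1) 1

/-- `σ_i = x_i - 1`. -/
noncomputable def sg {n : ℕ} (i : Fin n) : Rn n := Xv i - 1

section Aux

variable {n : ℕ}

/-- The ideal generated by the `σ_i` with `i ≠ l`. -/
noncomputable def Iaux (n : ℕ) (l : Fin n) : Ideal (Rn n) :=
  Ideal.span {r : Rn n | ∃ i : Fin n, i ≠ l ∧ r = sg i}

lemma mul_sub_one_mem {I : Ideal (Rn n)} {a b : Rn n}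
    (ha : a - 1 ∈ I) (hb : b - 1 ∈ I) : a * b - 1 ∈ I := by
  have h : a * b - 1 = (a - 1) * b + (b - 1) := by ring
  rw [h]
  exact I.add_mem (I.mul_mem_right b ha) hb

lemma lemA (l : Fin n) {j : Fin n} (hj : j ≠ l) (b : ℤ) :
    (AddMonoidAlgebra.single (Finsupp.single j b) 1 : Rn n) - 1 ∈ Iaux n l := by
  have hx : (AddMonoidAlgebra.single (Finsupp.single j 1) 1 : Rn n) - 1 ∈ Iaux n l :=
    Ideal.subset_span ⟨j, hj, rfl⟩
  have hxinv : (AddMonoidAlgebra.single (Finsupp.single j (-1)) 1 : Rn n) - 1 ∈ Iaux n l := by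
    have h1 : (AddMonoidAlgebra.single (Finsupp.single j (-1)) 1 : Rn n) *
        AddMonoidAlgebra.single (Finsupp.single j 1) 1 = 1 := by
      rw [AddMonoidAlgebra.single_mul_single]
      simp [AddMonoidAlgebra.one_def]
    have h2 : (AddMonoidAlgebra.single (Finsupp.single j (-1)) 1 : Rn n) - 1
        = -(AddMonoidAlgebra.single (Finsupp.single j (-1)) 1) *
          (AddMonoidAlgebra.single (Finsupp.single j 1) 1 - 1) := by
      rw [neg_mul, mul_sub, h1, mul_one]; ring
    rw [h2]
    exact Ideal.mul_mem_left _ _ hx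
  induction b using Int.induction_on with
  | zero => simp [AddMonoidAlgebra.one_def]
  | succ m ih =>
      have h : (AddMonoidAlgebra.single (Finsupp.single j ((m : ℤ) + 1)) 1 : Rn n)
          = AddMonoidAlgebra.single (Finsupp.single j (m : ℤ)) 1 *
            AddMonoidAlgebra.single (Finsupp.single j 1) 1 := by
        rw [AddMonoidAlgebra.single_mul_single, mul_one, ← Finsupp.single_add]
      rw [h]
      exact mul_sub_one_mem ih hx
  | pred m ih =>
      have h : (AddMonoidAlgebra.single (Finsupp.single j (-(m : ℤ) - 1)) 1 : Rn n)
          = AddMonoidAlgebra.single (Finsupp.single j (-(m : ℤ))) 1 *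
            AddMonoidAlgebra.single (Finsupp.single j (-1)) 1 := by
        rw [AddMonoidAlgebra.single_mul_single, mul_one, ← Finsupp.single_add]
        ring_nf
      rw [h]
      exact mul_sub_one_mem ih hxinv

lemma lemB (l : Fin n) : ∀ m : Fin n →₀ ℤ, m l = 0 →
    (AddMonoidAlgebra.single m 1 : Rn n) - 1 ∈ Iaux n l := by
  intro m
  induction m using Finsupp.induction with
  | zero => intro _; simp [AddMonoidAlgebra.one_def]
  | single_add a b f haf hb ih =>
      intro hml
      have hfa : f a = 0 := Finsupp.notMem_support_iff.mp haf
      have ha_ne : a ≠ l := by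
        rintro rfl
        rw [Finsupp.add_apply, Finsupp.single_eq_same, hfa, add_zero] at hml
        exact hb hml
      have hfl : f l = 0 := by
        rw [Finsupp.add_apply, Finsupp.single_eq_of_ne' ha_ne, zero_add] at hml
        exact hml
      have h : (AddMonoidAlgebra.single (Finsupp.single a b + f) 1 : Rn n)
          = AddMonoidAlgebra.single (Finsupp.single a b) 1 * AddMonoidAlgebra.single f 1 := by
        rw [AddMonoidAlgebra.single_mul_single, mul_one]
      rw [h]
      exact mul_sub_one_mem (lemA l ha_ne b) (ih hfl)

/-- projection to `ℤ[x_l^{±1}]`. -/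
noncomputable def piL (n : ℕ) (l : Fin n) : Rn n →+* AddMonoidAlgebra ℤ ℤ :=
  AddMonoidAlgebra.mapDomainRingHom ℤ (Finsupp.applyAddHom l)

/-- inclusion of `ℤ[x_l^{±1}]`. -/
noncomputable def sL (n : ℕ) (l : Fin n) : AddMonoidAlgebra ℤ ℤ →+* Rn n :=
  AddMonoidAlgebra.mapDomainRingHom ℤ (Finsupp.singleAddHom l)

lemma piL_single (l : Fin n) (m : Fin n →₀ ℤ) (c : ℤ) :
    piL n l (AddMonoidAlgebra.single m c) = AddMonoidAlgebra.single (m l) c :=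
  AddMonoidAlgebra.mapDomain_single

lemma sL_single (l : Fin n) (z : ℤ) (c : ℤ) :
    sL n l (AddMonoidAlgebra.single z c) = AddMonoidAlgebra.single (Finsupp.single l z) c :=
  AddMonoidAlgebra.mapDomain_single

lemma lemC (l : Fin n) (m : Fin n →₀ ℤ) :
    (AddMonoidAlgebra.single m 1 : Rn n) - sL n l (piL n l (AddMonoidAlgebra.single m 1))
      ∈ Iaux n l := by
  rw [piL_single, sL_single]
  set m' : Fin n →₀ ℤ := m - Finsupp.single l (m l) with hm'
  have hm'l : m' l = 0 := by simp [hm']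
  have hsum : Finsupp.single l (m l) + m' = m := by
    rw [hm']; abel
  have h : (AddMonoidAlgebra.single m 1 : Rn n)
      - AddMonoidAlgebra.single (Finsupp.single l (m l)) 1
      = AddMonoidAlgebra.single (Finsupp.single l (m l)) 1 *
        (AddMonoidAlgebra.single m' 1 - 1) := by
    rw [mul_sub, AddMonoidAlgebra.single_mul_single, mul_one, hsum, mul_one]
  rw [h]
  exact Ideal.mul_mem_left _ _ (lemB l m' hm'l)

lemma lemD (l : Fin n) (a : Rn n) :
    a - sL n l (piL n l a) ∈ Iaux n l := by
  induction a using AddMonoidAlgebra.induction_on with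
  | of m => rw [AddMonoidAlgebra.of_apply]; exact lemC l m
  | add f g hf hg =>
      have h : f + g - sL n l (piL n l (f + g))
          = (f - sL n l (piL n l f)) + (g - sL n l (piL n l g)) := by
        rw [map_add, map_add]; ring
      rw [h]; exact Ideal.add_mem _ hf hg
  | smul r f hf =>
      have h : r • f - sL n l (piL n l (r • f)) = r • (f - sL n l (piL n l f)) := by
        rw [map_zsmul, map_zsmul, smul_sub]
      rw [h, zsmul_eq_mul]
      exact Ideal.mul_mem_left _ _ hf

lemma piL_mem_zero (l : Fin n) {a : Rn n} (h : a ∈ Iaux n l) : piL n l a = 0 := by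
  have hle : Iaux n l ≤ RingHom.ker (piL n l) := by
    rw [Iaux, Ideal.span_le]
    rintro r ⟨i, hi, rfl⟩
    have : piL n l (sg i) = 0 := by
      rw [sg, Xv, map_sub, map_one, piL_single, Finsupp.single_eq_of_ne' hi,
        ← AddMonoidAlgebra.one_def, sub_self]
    exact this
  exact hle h

end Aux

/-- If `A` is an `n×n` matrix over `R_n` with `A·σ⃗ = 0⃗`, then every entry `a_{k,l}`
lies in the ideal generated by the `σ_i` with `i ≠ l`; in particular it lies in the
augmentation ideal `𝔄 = Σᵢ σ_i R_n`. -/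
theorem entries_in_augmentation_ideal (n : ℕ) (A : Matrix (Fin n) (Fin n) (Rn n))
    (hA : ∀ k : Fin n, ∑ i : Fin n, A k i * sg i = 0) (k l : Fin n) :
    A k l ∈ Ideal.span {r : Rn n | ∃ i : Fin n, i ≠ l ∧ r = sg i} ∧
      A k l ∈ Ideal.span (Set.range (sg (n := n))) := by
  have hmem : A k l ∈ Iaux n l := by
    have h1 : A k l * sg l ∈ Iaux n l := by
      have hsum := hA k
      rw [← Finset.add_sum_erase Finset.univ _ (Finset.mem_univ l)] at hsum
      have h : A k l * sg l = -∑ i ∈ Finset.univ.erase l, A k i * sg i := by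
        linear_combination hsum
      rw [h]
      refine neg_mem (Ideal.sum_mem _ fun i hi => ?_)
      exact Ideal.mul_mem_left _ _
        (Ideal.subset_span ⟨i, (Finset.mem_erase.mp hi).1, rfl⟩)
    have hb := lemD l (A k l)
    have h2 : sL n l (piL n l (A k l)) * sg l ∈ Iaux n l := by
      have h : sL n l (piL n l (A k l)) * sg l
          = A k l * sg l - (A k l - sL n l (piL n l (A k l))) * sg l := by ring
      rw [h]
      exact sub_mem h1 (Ideal.mul_mem_right _ _ hb)
    have hpisL : ∀ c : AddMonoidAlgebra ℤ ℤ, piL n l (sL n l c) = c := by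
      intro c
      induction c using AddMonoidAlgebra.induction_linear with
      | zero => simp
      | add f g hf hg => rw [map_add, map_add, hf, hg]
      | single a b => rw [sL_single, piL_single, Finsupp.single_eq_same]
    have hpisg : piL n l (sg l) = AddMonoidAlgebra.single (1 : ℤ) (1 : ℤ) - 1 := by
      rw [sg, Xv, map_sub, map_one, piL_single, Finsupp.single_eq_same]
    have h0 : piL n l (A k l) * (AddMonoidAlgebra.single (1 : ℤ) (1 : ℤ) - 1) = 0 := by
      have := piL_mem_zero l h2
      rwa [map_mul, hpisL, hpisg] at this
    have hX : (AddMonoidAlgebra.single (1 : ℤ) (1 : ℤ) : AddMonoidAlgebra ℤ ℤ) - 1 ≠ 0 := by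
      intro h
      rw [sub_eq_zero, AddMonoidAlgebra.one_def] at h
      rcases AddMonoidAlgebra.single_inj.mp h with ⟨h1, _⟩ | ⟨h1, _⟩ <;>
        norm_num at h1
    have hc0 : piL n l (A k l) = 0 := by
      rcases mul_eq_zero.mp h0 with h | h
      · exact h
      · exact absurd h hX
    have heq : A k l = A k l - sL n l (piL n l (A k l)) := by
      rw [hc0, map_zero, sub_zero]
    rw [heq]
    exact hb
  refine ⟨hmem, ?_⟩
  refine Ideal.span_mono ?_ hmem
  rintro r ⟨i, _, rfl⟩
  exact ⟨i, rfl⟩
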